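/- Let R be a commutative ring, let n, m ≥ 1 be natural numbers with N = n·m, and let α : Fin n → R be such that α i - α j is a unit of R whenever i ≠ j. Let F = ∏_{i : Fin n} (X - C (α i))^m ∈ R[X], a monic polynomial of degree N. Let C_F be the N × N companion matrix of F: C_F i j = 1 if j = i + 1 and i < N - 1, C_F (N-1) j = -(F.coeff j), and all other entries 0. Let J be the N × N matrix indexed by Fin n × Fin m (taken in lexicographic order) with J (i,a) (i,a) = α i, J (i,a) (i,a+1) = 1 for a < m - 1, and all other entries 0 (a block-diagonal matrix of n Jordan blocks of size m with eigenvalues α i). Then there exists an invertible N × N matrix V over R such that C_F * V = V * J, i.e., C_F and J are similar over R. -/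

import Mathlib

open Polynomial Matrix

section Helpers

variable {R : Type*} [CommRing R]

private lemma taylor_pow' (r : R) (p : R[X]) (k : ℕ) :
    taylor r (p ^ k) = (taylor r p) ^ k := by
  simp [taylor_apply, pow_comp]

private lemma hasse_eval_sum (p : R[X]) (a N : ℕ) (hN : p.natDegree < N) (r : R) :
    (Polynomial.hasseDeriv a p).eval r
      = ∑ k ∈ Finset.range N, ((k.choose a : ℕ) : R) * p.coeff k * r ^ (k - a) := by
  rw [hasseDeriv_apply, p.sum_over_range' (fun n => by simp) N hN, eval_finset_sum]
  refine Finset.sum_congr rfl fun k _ => ?_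
  rw [eval_monomial]

private lemma exists_inv_mod_X_pow (g : R[X]) (hu : IsUnit (g.coeff 0)) (k : ℕ) :
    ∃ h : R[X], (X : R[X]) ^ k ∣ g * h - 1 := by
  induction k with
  | zero => exact ⟨0, by simp⟩
  | succ k ih =>
    obtain ⟨h, s, hs⟩ := ih
    obtain ⟨u, hu'⟩ := hu
    refine ⟨h - X ^ k * C ((↑u⁻¹ : R) * s.coeff 0), ?_⟩
    rw [show g * (h - X ^ k * C ((↑u⁻¹ : R) * s.coeff 0)) - 1
        = (g * h - 1) - X ^ k * (g * C ((↑u⁻¹ : R) * s.coeff 0)) by ring,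
      hs, ← mul_sub, pow_succ]
    refine mul_dvd_mul_left _ (X_dvd_iff.mpr ?_)
    rw [coeff_sub, coeff_mul_C, ← hu']
    have : (u : R) * ((↑u⁻¹ : R) * s.coeff 0) = s.coeff 0 := by
      rw [← mul_assoc, Units.mul_inv, one_mul]
    rw [this, sub_self]

private lemma taylor_coeff_eq_of_dvd (r : R) (m a : ℕ) (ha : a < m) {p q : R[X]}
    (h : (X - C r) ^ m ∣ p - q) :
    (taylor r p).coeff a = (taylor r q).coeff a := by
  obtain ⟨c, hc⟩ := h
  have hXr : taylor r (X - C r) = X := by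
    rw [map_sub, taylor_X, taylor_C, add_sub_cancel_right]
  have h2 : taylor r p - taylor r q = X ^ m * taylor r c := by
    rw [← map_sub, hc, taylor_mul, taylor_pow', hXr]
  have h3 := congrArg (fun f => Polynomial.coeff f a) h2
  simp only [coeff_sub] at h3
  rwa [mul_comm, coeff_mul_X_pow', if_neg (by omega), sub_eq_zero] at h3

private lemma chain_identity (r : R) (k a : ℕ) :
    (((k + 1).choose a : ℕ) : R) * r ^ (k + 1 - a)
      = r * ((((k.choose a : ℕ)) : R) * r ^ (k - a))
        + (if 1 ≤ a then (((k.choose (a - 1) : ℕ)) : R) * r ^ (k - (a - 1)) else 0) := by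
  cases a with
  | zero =>
    simp [pow_succ, mul_comm, mul_assoc, mul_left_comm]
  | succ b =>
    rw [if_pos (Nat.le_add_left 1 b), Nat.succ_sub_one]
    rcases le_or_gt (b + 1) k with hk | hk
    · have e1 : k + 1 - (b + 1) = k - b := by omega
      rw [Nat.choose_succ_succ', e1]
      have hr : r * r ^ (k - (b + 1)) = r ^ (k - b) := by
        rw [← pow_succ']
        congr 1
        omega
      push_cast
      rw [← hr]
      ring
    · rcases Nat.lt_or_ge k b with hk2 | hk2
      · rw [Nat.choose_eq_zero_of_lt (by omega), Nat.choose_eq_zero_of_lt (by omega),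
          Nat.choose_eq_zero_of_lt (by omega)]
        simp
      · have hkb : k = b := by omega
        subst hkb
        simp [Nat.choose_eq_zero_of_lt (Nat.lt_succ_self k), Nat.sub_self]

end Helpers

/-- The companion matrix of `F = ∏ i, (X - C (α i))^m` is similar over `R` to the
block-diagonal Jordan matrix with `n` Jordan blocks of size `m` and eigenvalues
`α i`, provided the differences `α i - α j` (`i ≠ j`) are units. -/
theorem companion_similar_jordan {R : Type*} [CommRing R] (n m : ℕ)
    (hn : 1 ≤ n) (hm : 1 ≤ m) (α : Fin n → R)
    (hα : ∀ i j : Fin n, i ≠ j → IsUnit (α i - α j)) :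
    ∃ V : Matrix (Fin (n * m)) (Fin (n * m)) R,
      IsUnit V ∧
        (Matrix.of fun i j : Fin (n * m) =>
            if (i : ℕ) + 1 = n * m then
              -((∏ i' : Fin n, (X - C (α i')) ^ m).coeff (j : ℕ))
            else if (j : ℕ) = (i : ℕ) + 1 then (1 : R) else 0) * V =
          V *
            Matrix.reindex finProdFinEquiv finProdFinEquiv
              (Matrix.of fun p q : Fin n × Fin m =>
                if p = q then α p.1
                else if p.1 = q.1 ∧ (q.2 : ℕ) = (p.2 : ℕ) + 1 then (1 : R) else 0) := by
  rcases subsingleton_or_nontrivial R with hR | hR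
  · exact ⟨1, isUnit_one, Subsingleton.elim _ _⟩
  have hN1 : 1 ≤ n * m := Nat.one_le_iff_ne_zero.mpr (by positivity)
  set F : R[X] := ∏ i' : Fin n, (X - C (α i')) ^ m with hF
  have hFm : F.Monic := monic_prod_of_monic _ _ fun i _ => (monic_X_sub_C _).pow m
  have hFdeg : F.natDegree = n * m := by
    rw [hF, natDegree_prod_of_monic _ _ fun i _ => (monic_X_sub_C _).pow m]
    rw [Finset.sum_congr rfl fun (i : Fin n) _ => by
      rw [(monic_X_sub_C (α i)).natDegree_pow, natDegree_X_sub_C, mul_one]]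
    rw [Finset.sum_const, Finset.card_univ, Fintype.card_fin, smul_eq_mul]
  set e := (finProdFinEquiv : Fin n × Fin m ≃ Fin (n * m)) with he
  set vv : Fin (n * m) → Fin n × Fin m → R :=
    fun k p => (((k : ℕ).choose (p.2 : ℕ) : ℕ) : R) * α p.1 ^ ((k : ℕ) - (p.2 : ℕ)) with hvv
  set V : Matrix (Fin (n * m)) (Fin (n * m)) R := Matrix.of fun k q => vv k (e.symm q) with hV
  -- the Taylor coefficients of `F` vanish below order `m`
  have htaylor : ∀ (i : Fin n) (a : ℕ), a < m → (taylor (α i) F).coeff a = 0 := by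
    intro i a ha
    obtain ⟨G, hG⟩ : (X - C (α i)) ^ m ∣ F :=
      Finset.dvd_prod_of_mem (fun i' => (X - C (α i')) ^ m) (Finset.mem_univ i)
    have hXr : taylor (α i) (X - C (α i)) = X := by
      rw [map_sub, taylor_X, taylor_C, add_sub_cancel_right]
    rw [hG, taylor_mul, taylor_pow', hXr, mul_comm, coeff_mul_X_pow', if_neg (by omega)]
  have hcoeffN : F.coeff (n * m) = 1 := by
    have h := hFm.coeff_natDegree
    rwa [hFdeg] at h
  have hsum : ∀ (i : Fin n) (a : ℕ), a < m →
      ∑ j ∈ Finset.range (n * m), ((j.choose a : ℕ) : R) * F.coeff j * α i ^ (j - a)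
        = -((((n * m).choose a : ℕ) : R) * α i ^ (n * m - a)) := by
    intro i a ha
    have h0 : (Polynomial.hasseDeriv a F).eval (α i) = 0 := by
      rw [← taylor_coeff]; exact htaylor i a ha
    rw [hasse_eval_sum F a (n * m + 1) (by omega) (α i), Finset.sum_range_succ, hcoeffN] at h0
    linear_combination h0
  -- evaluation of the `J` columns
  have hJcol : ∀ (k q : Fin (n * m)),
      (V * (Matrix.reindex e e (Matrix.of fun p q' : Fin n × Fin m =>
          if p = q' then α p.1
          else if p.1 = q'.1 ∧ (q'.2 : ℕ) = (p.2 : ℕ) + 1 then (1 : R) else 0))) k q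
        = α (e.symm q).1 * vv k (e.symm q)
          + (if 1 ≤ ((e.symm q).2 : ℕ) then
              (((k : ℕ).choose (((e.symm q).2 : ℕ) - 1) : ℕ) : R)
                * α (e.symm q).1 ^ ((k : ℕ) - (((e.symm q).2 : ℕ) - 1))
             else 0) := by
    intro k q
    rw [Matrix.mul_apply]
    rw [← Fintype.sum_equiv e
      (fun p : Fin n × Fin m =>
        vv k p * (if p = e.symm q then α p.1
          else if p.1 = (e.symm q).1 ∧ (((e.symm q).2 : ℕ)) = (p.2 : ℕ) + 1 then (1 : R) else 0))
      (fun j => V k j * (Matrix.reindex e e (Matrix.of fun p q' : Fin n × Fin m =>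
          if p = q' then α p.1
          else if p.1 = q'.1 ∧ (q'.2 : ℕ) = (p.2 : ℕ) + 1 then (1 : R) else 0)) j q)
      (fun p => by
        simp [hV, Matrix.reindex_apply, Matrix.submatrix_apply, Equiv.symm_apply_apply])]
    have hsplit : ∀ p : Fin n × Fin m,
        vv k p * (if p = e.symm q then α p.1
          else if p.1 = (e.symm q).1 ∧ (((e.symm q).2 : ℕ)) = (p.2 : ℕ) + 1 then (1 : R) else 0)
          = (if p = e.symm q then vv k p * α p.1 else 0)
            + (if p.1 = (e.symm q).1 ∧ (((e.symm q).2 : ℕ)) = (p.2 : ℕ) + 1 then vv k p else 0) := by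
      intro p
      by_cases hp : p = e.symm q
      · subst hp
        rw [if_pos rfl, if_pos rfl, if_neg (by omega), add_zero]
      · rw [if_neg hp, if_neg hp, zero_add]
        by_cases hp2 : p.1 = (e.symm q).1 ∧ (((e.symm q).2 : ℕ)) = (p.2 : ℕ) + 1
        · rw [if_pos hp2, if_pos hp2, mul_one]
        · rw [if_neg hp2, if_neg hp2, mul_zero]
    rw [Finset.sum_congr rfl fun p _ => hsplit p, Finset.sum_add_distrib]
    congr 1
    · rw [Finset.sum_ite_eq' Finset.univ (e.symm q) (fun p => vv k p * α p.1),
        if_pos (Finset.mem_univ _), mul_comm]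
    · by_cases ha : 1 ≤ (((e.symm q).2 : ℕ))
      · have ha' : ((e.symm q).2 : ℕ) - 1 < m := by omega
        have hcond : ∀ p : Fin n × Fin m,
            (p.1 = (e.symm q).1 ∧ (((e.symm q).2 : ℕ)) = (p.2 : ℕ) + 1)
              ↔ p = ((e.symm q).1, (⟨((e.symm q).2 : ℕ) - 1, ha'⟩ : Fin m)) := by
          intro p
          constructor
          · rintro ⟨h1, h2⟩
            refine Prod.ext h1 (Fin.ext ?_)
            simp only []
            omega
          · rintro rfl
            exact ⟨rfl, by simp; omega⟩
        rw [Finset.sum_congr rfl fun p _ => by rw [show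
            (if p.1 = (e.symm q).1 ∧ (((e.symm q).2 : ℕ)) = (p.2 : ℕ) + 1 then vv k p else 0)
            = (if p = ((e.symm q).1, (⟨((e.symm q).2 : ℕ) - 1, ha'⟩ : Fin m)) then vv k p else 0)
            from by rw [if_congr (hcond p) rfl rfl]]]
        rw [Finset.sum_ite_eq' Finset.univ _ (fun p => vv k p), if_pos (Finset.mem_univ _),
          if_pos ha]
      · rw [if_neg ha]
        refine Finset.sum_eq_zero fun p _ => ?_
        rw [if_neg]
        rintro ⟨-, h2⟩
        omega
  refine ⟨V, ?_, ?_⟩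
  · -- IsUnit V : construct a left inverse coming from Taylor expansions
    have hFne1 : F ≠ 1 := by
      intro h
      rw [h, natDegree_one] at hFdeg
      omega
    set G : Fin n → R[X] := fun i0 => ∏ i' ∈ Finset.univ.erase i0, (X - C (α i')) ^ m with hG
    have hFGi : ∀ i0, F = (X - C (α i0)) ^ m * G i0 := fun i0 =>
      (Finset.mul_prod_erase _ _ (Finset.mem_univ i0)).symm
    have hGunit : ∀ i0, IsUnit ((taylor (α i0) (G i0)).coeff 0) := by
      intro i0
      rw [taylor_coeff_zero, hG]
      simp only [eval_prod, eval_pow, eval_sub, eval_X, eval_C]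
      refine Finset.prod_induction _ IsUnit (fun _ _ => IsUnit.mul) isUnit_one ?_
      intro i' hi'
      exact (hα i0 i' (Ne.symm (Finset.ne_of_mem_erase hi'))).pow m
    have hHex : ∀ i0 : Fin n, ∃ H : R[X], (X - C (α i0)) ^ m ∣ (G i0) * H - 1 := by
      intro i0
      obtain ⟨h, c, hc⟩ := exists_inv_mod_X_pow (taylor (α i0) (G i0)) (hGunit i0) m
      refine ⟨taylor (-(α i0)) h, taylor (-(α i0)) c, ?_⟩
      have h2 := congrArg (taylor (-(α i0))) hc
      rw [map_sub, taylor_mul, taylor_taylor, neg_add_cancel, taylor_zero', LinearMap.id_apply,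
        taylor_one, taylor_mul, taylor_pow', taylor_X, C_1] at h2
      rw [h2, C_neg]
      ring
    choose H hH using hHex
    set P : Fin (n * m) → R[X] := fun q0 =>
      ((X - C (α (e.symm q0).1)) ^ (((e.symm q0).2 : ℕ))
        * (G (e.symm q0).1 * H (e.symm q0).1)) %ₘ F with hP
    have hPdeg : ∀ q0, (P q0).natDegree < n * m := by
      intro q0
      have h := natDegree_modByMonic_lt
        ((X - C (α (e.symm q0).1)) ^ (((e.symm q0).2 : ℕ))
          * (G (e.symm q0).1 * H (e.symm q0).1)) hFm hFne1
      rwa [hFdeg] at h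
    have hPmodF : ∀ q0, F ∣ P q0
        - (X - C (α (e.symm q0).1)) ^ (((e.symm q0).2 : ℕ))
          * (G (e.symm q0).1 * H (e.symm q0).1) := by
      intro q0
      refine ⟨-(((X - C (α (e.symm q0).1)) ^ (((e.symm q0).2 : ℕ))
        * (G (e.symm q0).1 * H (e.symm q0).1)) /ₘ F), ?_⟩
      have hPdef : P q0 = ((X - C (α (e.symm q0).1)) ^ (((e.symm q0).2 : ℕ))
        * (G (e.symm q0).1 * H (e.symm q0).1)) %ₘ F := rfl
      rw [hPdef, modByMonic_eq_sub_mul_div _ F]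
      ring
    have hPkey : ∀ q0 q : Fin (n * m),
        (taylor (α (e.symm q).1) (P q0)).coeff (((e.symm q).2 : ℕ))
          = if q0 = q then 1 else 0 := by
      intro q0 q
      by_cases hi : (e.symm q0).1 = (e.symm q).1
      · -- same block
        rw [← hi]
        have h2 : (X - C (α (e.symm q0).1)) ^ m
            ∣ P q0 - (X - C (α (e.symm q0).1)) ^ (((e.symm q0).2 : ℕ)) := by
          obtain ⟨c, hc⟩ := hH (e.symm q0).1
          have hrw : P q0 - (X - C (α (e.symm q0).1)) ^ (((e.symm q0).2 : ℕ))
              = (P q0 - (X - C (α (e.symm q0).1)) ^ (((e.symm q0).2 : ℕ))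
                  * (G (e.symm q0).1 * H (e.symm q0).1))
                + (X - C (α (e.symm q0).1)) ^ (((e.symm q0).2 : ℕ))
                  * (G (e.symm q0).1 * H (e.symm q0).1 - 1) := by
            ring
          rw [hrw]
          refine dvd_add (dvd_trans ⟨G (e.symm q0).1, hFGi (e.symm q0).1⟩ (hPmodF q0)) ?_
          rw [hc]
          exact Dvd.dvd.mul_left (dvd_mul_right _ _) _
        rw [taylor_coeff_eq_of_dvd (α (e.symm q0).1) m _ (e.symm q).2.isLt h2]
        rw [taylor_pow', map_sub, taylor_X, taylor_C, add_sub_cancel_right, coeff_X_pow]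
        by_cases hq : q0 = q
        · subst hq
          rw [if_pos rfl, if_pos rfl]
        · rw [if_neg, if_neg hq]
          intro h
          apply hq
          have : e.symm q0 = e.symm q := Prod.ext hi (Fin.ext h.symm)
          exact e.symm.injective this
      · -- different block: P q0 vanishes mod (X - α i)^m
        have hq : q0 ≠ q := fun h => hi (by rw [h])
        have d1 : (X - C (α (e.symm q).1)) ^ m ∣ F := by
          obtain ⟨G', hG'⟩ := Finset.dvd_prod_of_mem
            (fun i' => (X - C (α i')) ^ m) (Finset.mem_univ (e.symm q).1)
          exact ⟨G', hG'⟩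
        have d2 : (X - C (α (e.symm q).1)) ^ m
            ∣ G (e.symm q0).1 := by
          rw [hG]
          exact Finset.dvd_prod_of_mem _
            (Finset.mem_erase.mpr ⟨fun h => hi h.symm, Finset.mem_univ _⟩)
        have h2 : (X - C (α (e.symm q).1)) ^ m ∣ P q0 - 0 := by
          rw [sub_zero]
          have : P q0 = (P q0
              - (X - C (α (e.symm q0).1)) ^ (((e.symm q0).2 : ℕ))
                * (G (e.symm q0).1 * H (e.symm q0).1))
              + (X - C (α (e.symm q0).1)) ^ (((e.symm q0).2 : ℕ))
                * (G (e.symm q0).1 * H (e.symm q0).1) := by ring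
          rw [this]
          exact dvd_add (dvd_trans d1 (hPmodF q0))
            (Dvd.dvd.mul_left (Dvd.dvd.mul_right d2 _) _)
        rw [taylor_coeff_eq_of_dvd (α (e.symm q).1) m _ (e.symm q).2.isLt h2]
        rw [if_neg hq]
        simp
    set W : Matrix (Fin (n * m)) (Fin (n * m)) R :=
      Matrix.of fun q0 k => (P q0).coeff (k : ℕ) with hW
    have hWV : W * V = 1 := by
      ext q0 q
      rw [Matrix.mul_apply]
      have hterm : ∀ k : Fin (n * m),
          W q0 k * V k q
            = (((k : ℕ).choose (((e.symm q).2 : ℕ)) : ℕ) : R) * (P q0).coeff (k : ℕ)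
              * α (e.symm q).1 ^ ((k : ℕ) - (((e.symm q).2 : ℕ))) := by
        intro k
        simp only [hW, hV, hvv, Matrix.of_apply]
        ring
      rw [Finset.sum_congr rfl fun k _ => hterm k]
      rw [Fin.sum_univ_eq_sum_range (fun k =>
        ((k.choose (((e.symm q).2 : ℕ)) : ℕ) : R) * (P q0).coeff k
          * α (e.symm q).1 ^ (k - (((e.symm q).2 : ℕ)))) (n * m)]
      rw [← hasse_eval_sum (P q0) (((e.symm q).2 : ℕ)) (n * m) (hPdeg q0) (α (e.symm q).1)]
      rw [← taylor_coeff, hPkey q0 q, Matrix.one_apply]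
    exact ⟨⟨V, W, mul_eq_one_comm.mp hWV, hWV⟩, rfl⟩
  · -- the similarity relation
    ext k q
    rw [Matrix.mul_apply, hJcol k q]
    by_cases hk : (k : ℕ) + 1 = n * m
    · have hterm : ∀ j : Fin (n * m),
          (Matrix.of fun i j : Fin (n * m) =>
            if (i : ℕ) + 1 = n * m then -(F.coeff (j : ℕ))
            else if (j : ℕ) = (i : ℕ) + 1 then (1 : R) else 0) k j * V j q
            = -(((((j : ℕ)).choose (((e.symm q).2 : ℕ)) : ℕ) : R) * F.coeff (j : ℕ)
                * α (e.symm q).1 ^ (((j : ℕ)) - (((e.symm q).2 : ℕ)))) := by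
        intro j
        simp only [Matrix.of_apply, if_pos hk, hV, hvv]
        ring
      rw [Finset.sum_congr rfl fun j _ => hterm j, Finset.sum_neg_distrib]
      rw [Fin.sum_univ_eq_sum_range (fun j =>
        ((j.choose (((e.symm q).2 : ℕ)) : ℕ) : R) * F.coeff j
          * α (e.symm q).1 ^ (j - (((e.symm q).2 : ℕ)))) (n * m)]
      rw [hsum (e.symm q).1 _ (e.symm q).2.isLt, neg_neg]
      have := chain_identity (α (e.symm q).1) (k : ℕ) (((e.symm q).2 : ℕ))
      rw [hk] at this
      rw [this, hvv]
    · have hk1 : (k : ℕ) + 1 < n * m := lt_of_le_of_ne k.isLt hk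
      set k1 : Fin (n * m) := ⟨(k : ℕ) + 1, hk1⟩ with hk1def
      have hrow : ∑ j : Fin (n * m),
          (Matrix.of fun i j : Fin (n * m) =>
            if (i : ℕ) + 1 = n * m then -(F.coeff (j : ℕ))
            else if (j : ℕ) = (i : ℕ) + 1 then (1 : R) else 0) k j * V j q
            = V k1 q := by
        rw [Finset.sum_eq_single k1]
        · simp only [Matrix.of_apply, if_neg hk, hk1def]
          simp
        · intro j _ hj
          simp only [Matrix.of_apply, if_neg hk]
          rw [if_neg, zero_mul]
          intro h
          exact hj (Fin.ext h)
        · intro h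
          exact absurd (Finset.mem_univ k1) h
      rw [hrow]
      have := chain_identity (α (e.symm q).1) (k : ℕ) (((e.symm q).2 : ℕ))
      simp only [hV, hvv, Matrix.of_apply, hk1def]
      exact this
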